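/- arXiv:2406.10910 — 3 statements merged into one kernel-verified Lean document; each statement's English description precedes it below -/
import Mathlib

section
/- Fix n, and for each i = 1,…,n let ω_i > 0 be a real weight, B_i an m×m complex Hermitian positive definite matrix, C_i a d×d complex Hermitian positive definite matrix, and A_i an m×d complex matrix. Then for every choice of m×d complex matrices Y_1,…,Y_n, Σ_i ω_i · Re tr(2 A_iᴴ Y_i C_i − Y_iᴴ B_i Y_i C_i) ≤ Σ_i ω_i · Re tr(C_i A_iᴴ B_i⁻¹ A_i), and equality holds when Y_i = B_i⁻¹ A_i for every i. Consequently, the supremum over (Y_1,…,Y_n) of the left-hand side equals Σ_i ω_i · Re tr(C_i A_iᴴ B_i⁻¹ A_i). -/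
open Matrix Complex
open scoped ComplexOrder

lemma trace_re_nonneg {k : ℕ} {M : Matrix (Fin k) (Fin k) ℂ} (hM : M.PosSemidef) :
    0 ≤ (M.trace).re := by
  rw [Matrix.trace]
  rw [Complex.re_sum]
  refine Finset.sum_nonneg fun i _ => ?_
  have := hM.re_dotProduct_nonneg (Pi.single i 1)
  simpa [Matrix.mulVec_single, Matrix.diag, dotProduct, Pi.single_apply, apply_ite] using this

open scoped MatrixOrder in
lemma trace_mul_re_nonneg {k : ℕ} {M N : Matrix (Fin k) (Fin k) ℂ}
    (hM : M.PosSemidef) (hN : N.PosSemidef) : 0 ≤ (Matrix.trace (M * N)).re := by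
  have h1 : M * N = M * (CFC.sqrt N * CFC.sqrt N) := by
    rw [CFC.sqrt_mul_sqrt_self N (Matrix.nonneg_iff_posSemidef.mpr hN)]
  have h2 : Matrix.trace (M * (CFC.sqrt N * CFC.sqrt N)) = Matrix.trace ((CFC.sqrt N)ᴴ * M * CFC.sqrt N) := by
    rw [(Matrix.nonneg_iff_posSemidef.mp (CFC.sqrt_nonneg N)).1, ← Matrix.mul_assoc, Matrix.trace_mul_comm, Matrix.mul_assoc]
  rw [h1, h2]
  exact trace_re_nonneg (hM.conjTranspose_mul_mul_same _)

lemma key_eq {m d : ℕ} {B : Matrix (Fin m) (Fin m) ℂ} (hB : B.PosDef)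
    {C : Matrix (Fin d) (Fin d) ℂ} (hC : C.PosDef)
    (A Y : Matrix (Fin m) (Fin d) ℂ) :
    (Matrix.trace ((2 : ℂ) • (Aᴴ * Y * C) - Yᴴ * B * Y * C)).re
      = (Matrix.trace (C * Aᴴ * B⁻¹ * A)).re
        - (Matrix.trace ((Y - B⁻¹ * A)ᴴ * B * (Y - B⁻¹ * A) * C)).re := by
  set W := B⁻¹ * A with hW
  set Z := Y - W with hZ
  have hBW : B * W = A := by
    rw [hW, ← Matrix.mul_assoc, Matrix.mul_nonsing_inv _ hB.det_pos.ne'.isUnit, Matrix.one_mul]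
  have hWB : Wᴴ * B = Aᴴ := by
    calc Wᴴ * B = Wᴴ * Bᴴ := by rw [hB.1.eq]
    _ = (B * W)ᴴ := (Matrix.conjTranspose_mul B W).symm
    _ = Aᴴ := by rw [hBW]
  have hY : Y = Z + W := by rw [hZ]; abel
  have hmat : (2 : ℂ) • (Aᴴ * Y * C) - Yᴴ * B * Y * C
      = (Aᴴ * Z * C - Zᴴ * A * C) + (Aᴴ * W * C - Zᴴ * B * Z * C) := by
    rw [hY, conjTranspose_add]
    have e1 : Zᴴ * B * W = Zᴴ * A := by rw [Matrix.mul_assoc, hBW]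
    have e2 : Wᴴ * B * Z = Aᴴ * Z := by rw [hWB]
    have e3 : Wᴴ * B * W = Aᴴ * W := by rw [hWB]
    simp only [Matrix.add_mul, Matrix.mul_add, e1, e2, e3, two_smul]
    noncomm_ring
  rw [hmat, Matrix.trace_add, Matrix.trace_sub, Matrix.trace_sub]
  have h1 : star (Matrix.trace (Aᴴ * Z * C)) = Matrix.trace (Zᴴ * A * C) := by
    rw [← Matrix.trace_conjTranspose, Matrix.conjTranspose_mul, Matrix.conjTranspose_mul,
      conjTranspose_conjTranspose, hC.1.eq, Matrix.trace_mul_comm]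
  have h2 : Matrix.trace (C * Aᴴ * B⁻¹ * A) = Matrix.trace (Aᴴ * W * C) := by
    rw [hW, show C * Aᴴ * B⁻¹ * A = C * (Aᴴ * (B⁻¹ * A)) by rw [Matrix.mul_assoc, Matrix.mul_assoc],
      Matrix.trace_mul_comm]
  rw [h2]
  have h3 : (Matrix.trace (Zᴴ * A * C)).re = (Matrix.trace (Aᴴ * Z * C)).re := by
    rw [← h1]; exact (Complex.conj_re _)
  simp [Complex.sub_re, Complex.add_re, h3]


/-- Quadratic transform with matrix coefficients (Proposition 2): for positive
weights `ω_i`, Hermitian positive definite `B_i`, `C_i`, and matrices `A_i`, the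
function `Y ↦ Σ_i ω_i Re tr(2 A_iᴴ Y_i C_i − Y_iᴴ B_i Y_i C_i)` is upper bounded by
`Σ_i ω_i Re tr(C_i A_iᴴ B_i⁻¹ A_i)`, with equality at `Y_i = B_i⁻¹ A_i`; hence the
supremum over `Y` of the left-hand side equals the right-hand side. -/
theorem quadratic_transform {n m d : ℕ}
    (ω : Fin n → ℝ) (hω : ∀ i, 0 < ω i)
    (B : Fin n → Matrix (Fin m) (Fin m) ℂ) (hB : ∀ i, (B i).PosDef)
    (C : Fin n → Matrix (Fin d) (Fin d) ℂ) (hC : ∀ i, (C i).PosDef)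
    (A : Fin n → Matrix (Fin m) (Fin d) ℂ) :
    (∀ Y : Fin n → Matrix (Fin m) (Fin d) ℂ,
      ∑ i, ω i *
          (Matrix.trace ((2 : ℂ) • ((A i)ᴴ * Y i * C i) - (Y i)ᴴ * B i * Y i * C i)).re ≤
        ∑ i, ω i * (Matrix.trace (C i * (A i)ᴴ * (B i)⁻¹ * A i)).re) ∧
    (∑ i, ω i *
        (Matrix.trace ((2 : ℂ) • ((A i)ᴴ * ((B i)⁻¹ * A i) * C i)
            - ((B i)⁻¹ * A i)ᴴ * B i * ((B i)⁻¹ * A i) * C i)).re =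
      ∑ i, ω i * (Matrix.trace (C i * (A i)ᴴ * (B i)⁻¹ * A i)).re) ∧
    IsGreatest
      {v : ℝ | ∃ Y : Fin n → Matrix (Fin m) (Fin d) ℂ,
        v = ∑ i, ω i *
            (Matrix.trace ((2 : ℂ) • ((A i)ᴴ * Y i * C i) - (Y i)ᴴ * B i * Y i * C i)).re}
      (∑ i, ω i * (Matrix.trace (C i * (A i)ᴴ * (B i)⁻¹ * A i)).re) := by
  have hle : ∀ Y : Fin n → Matrix (Fin m) (Fin d) ℂ,
      ∑ i, ω i *
          (Matrix.trace ((2 : ℂ) • ((A i)ᴴ * Y i * C i) - (Y i)ᴴ * B i * Y i * C i)).re ≤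
        ∑ i, ω i * (Matrix.trace (C i * (A i)ᴴ * (B i)⁻¹ * A i)).re := by
    intro Y
    refine Finset.sum_le_sum fun i _ => ?_
    rw [key_eq (hB i) (hC i)]
    have hpos : 0 ≤ (Matrix.trace
        ((Y i - (B i)⁻¹ * A i)ᴴ * B i * (Y i - (B i)⁻¹ * A i) * C i)).re :=
      trace_mul_re_nonneg ((hB i).posSemidef.conjTranspose_mul_mul_same _) (hC i).posSemidef
    have := (hω i).le
    nlinarith
  have heq : ∑ i, ω i *
        (Matrix.trace ((2 : ℂ) • ((A i)ᴴ * ((B i)⁻¹ * A i) * C i)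
            - ((B i)⁻¹ * A i)ᴴ * B i * ((B i)⁻¹ * A i) * C i)).re =
      ∑ i, ω i * (Matrix.trace (C i * (A i)ᴴ * (B i)⁻¹ * A i)).re := by
    refine Finset.sum_congr rfl fun i _ => ?_
    rw [key_eq (hB i) (hC i)]
    simp
  exact ⟨hle, heq, ⟨fun i => (B i)⁻¹ * A i, heq.symm⟩,
    fun v ⟨Y, hY⟩ => hY ▸ hle Y⟩
end

section
/- Let B be an m×m complex Hermitian positive definite matrix, C a d×d complex Hermitian positive definite matrix, and A an m×d complex matrix. If an m×d complex matrix Y satisfies Re tr(2 Aᴴ Y C − Yᴴ B Y C) = Re tr(C Aᴴ B⁻¹ A), then Y = B⁻¹ A; i.e., the maximizer of Y ↦ Re tr(2 Aᴴ Y C − Yᴴ B Y C) is unique and equals B⁻¹A. -/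
open Matrix Complex
open scoped ComplexOrder

private lemma trace_re_eq_zero_imp_zero {m n : ℕ} (N : Matrix (Fin m) (Fin n) ℂ)
    (h : (Matrix.trace (Nᴴ * N)).re = 0) : N = 0 := by
  have key : (Matrix.trace (Nᴴ * N)).re = ∑ j, ∑ i, Complex.normSq (N i j) := by
    have : Matrix.trace (Nᴴ * N) = ∑ j, ∑ i, (Complex.normSq (N i j) : ℂ) := by
      simp only [Matrix.trace, Matrix.diag, Matrix.mul_apply, Matrix.conjTranspose_apply]
      congr 1; funext j; congr 1; funext i
      rw [mul_comm, Complex.star_def, Complex.mul_conj]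
    rw [this]
    simp
  rw [key] at h
  ext i j
  have h1 : ∀ j ∈ Finset.univ, (0:ℝ) ≤ ∑ i, Complex.normSq (N i j) := by
    intro j _
    exact Finset.sum_nonneg fun i _ => Complex.normSq_nonneg _
  have h2 := (Finset.sum_eq_zero_iff_of_nonneg h1).mp h j (Finset.mem_univ j)
  have h3 := (Finset.sum_eq_zero_iff_of_nonneg
    (fun i _ => Complex.normSq_nonneg (N i j))).mp h2 i (Finset.mem_univ i)
  simpa using Complex.normSq_eq_zero.mp h3

/-- Uniqueness of the maximizer in the quadratic transform (Proposition 2): if `B`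
and `C` are Hermitian positive definite and `Y` attains the maximum value
`Re tr(C Aᴴ B⁻¹ A)` of `Y ↦ Re tr(2 Aᴴ Y C − Yᴴ B Y C)`, then `Y = B⁻¹ A`. -/
theorem quadratic_transform_unique_maximizer {m d : ℕ}
    (B : Matrix (Fin m) (Fin m) ℂ) (hB : B.PosDef)
    (C : Matrix (Fin d) (Fin d) ℂ) (hC : C.PosDef)
    (A Y : Matrix (Fin m) (Fin d) ℂ)
    (hY : (Matrix.trace ((2 : ℂ) • (Aᴴ * Y * C) - Yᴴ * B * Y * C)).re =
      (Matrix.trace (C * Aᴴ * B⁻¹ * A)).re) :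
    Y = B⁻¹ * A := by
  have hdetB : IsUnit B.det := (Matrix.isUnit_iff_isUnit_det B).mp hB.isUnit
  have hBinvH : (B⁻¹)ᴴ = B⁻¹ := by
    rw [Matrix.conjTranspose_nonsing_inv, hB.isHermitian.eq]
  set Z : Matrix (Fin m) (Fin d) ℂ := Y - B⁻¹ * A with hZ
  -- expand the quadratic form
  have hZH : Zᴴ = Yᴴ - Aᴴ * B⁻¹ := by
    rw [hZ, Matrix.conjTranspose_sub, Matrix.conjTranspose_mul, hBinvH]
  have hexp : Zᴴ * B * Z * C =
      Yᴴ * B * Y * C - Yᴴ * (A * C) - Aᴴ * Y * C + Aᴴ * B⁻¹ * A * C := by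
    rw [hZH, hZ]
    have e1 : (Yᴴ - Aᴴ * B⁻¹) * B = Yᴴ * B - Aᴴ := by
      rw [Matrix.sub_mul, Matrix.mul_assoc, Matrix.nonsing_inv_mul B hdetB, Matrix.mul_one]
    rw [e1]
    have e2 : (Yᴴ * B - Aᴴ) * (Y - B⁻¹ * A) =
        Yᴴ * B * Y - Yᴴ * A - Aᴴ * Y + Aᴴ * (B⁻¹ * A) := by
      rw [Matrix.sub_mul, Matrix.mul_sub, Matrix.mul_sub]
      rw [show Yᴴ * B * (B⁻¹ * A) = Yᴴ * A by
        rw [← Matrix.mul_assoc, Matrix.mul_assoc Yᴴ B B⁻¹,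
          Matrix.mul_nonsing_inv B hdetB, Matrix.mul_one]]
      abel
    rw [e2]
    rw [Matrix.add_mul, Matrix.sub_mul, Matrix.sub_mul, Matrix.mul_assoc Yᴴ A C,
      ← Matrix.mul_assoc Aᴴ B⁻¹ A]
  -- real parts of cross terms agree
  have hcross : (Matrix.trace (Yᴴ * (A * C))).re = (Matrix.trace (Aᴴ * Y * C)).re := by
    have h1 : Matrix.trace (Yᴴ * (A * C)) = star (Matrix.trace ((Yᴴ * (A * C))ᴴ)) := by
      rw [Matrix.trace_conjTranspose, star_star]
    have h2 : (Yᴴ * (A * C))ᴴ = C * (Aᴴ * Y) := by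
      rw [Matrix.conjTranspose_mul, Matrix.conjTranspose_mul, Matrix.conjTranspose_conjTranspose,
        hC.isHermitian.eq, Matrix.mul_assoc]
    have h3 : Matrix.trace (C * (Aᴴ * Y)) = Matrix.trace (Aᴴ * Y * C) :=
      Matrix.trace_mul_comm C (Aᴴ * Y)
    rw [h1, h2, h3]
    exact Complex.conj_re _
  have hlast : Matrix.trace (Aᴴ * B⁻¹ * A * C) = Matrix.trace (C * Aᴴ * B⁻¹ * A) := by
    rw [Matrix.trace_mul_comm (Aᴴ * B⁻¹ * A) C]
    simp only [Matrix.mul_assoc]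
  -- deduce Re tr(Zᴴ B Z C) = 0
  have hzero : (Matrix.trace (Zᴴ * B * Z * C)).re = 0 := by
    have hYre : 2 * (Matrix.trace (Aᴴ * Y * C)).re - (Matrix.trace (Yᴴ * B * Y * C)).re =
        (Matrix.trace (C * Aᴴ * B⁻¹ * A)).re := by
      have : Matrix.trace ((2 : ℂ) • (Aᴴ * Y * C) - Yᴴ * B * Y * C) =
          2 * Matrix.trace (Aᴴ * Y * C) - Matrix.trace (Yᴴ * B * Y * C) := by
        rw [Matrix.trace_sub, Matrix.trace_smul]; simp
      rw [this] at hY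
      simpa using hY
    rw [hexp, Matrix.trace_add, Matrix.trace_sub, Matrix.trace_sub, hlast]
    simp only [Complex.add_re, Complex.sub_re, hcross]
    linarith
  -- square roots
  set S : Matrix (Fin d) (Fin d) ℂ := (open scoped MatrixOrder in CFC.sqrt C) with hS
  set T : Matrix (Fin m) (Fin m) ℂ := (open scoped MatrixOrder in CFC.sqrt B) with hT
  have hSS : S * S = C := open scoped MatrixOrder in CFC.sqrt_mul_sqrt_self C hC.posSemidef.nonneg
  have hTT : T * T = B := open scoped MatrixOrder in CFC.sqrt_mul_sqrt_self B hB.posSemidef.nonneg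
  have hSH : Sᴴ = S := open scoped MatrixOrder in (CFC.sqrt_nonneg C).posSemidef.isHermitian.eq
  have hTH : Tᴴ = T := open scoped MatrixOrder in (CFC.sqrt_nonneg B).posSemidef.isHermitian.eq
  have hdetS : IsUnit S.det := by
    have : S.det * S.det = C.det := by rw [← Matrix.det_mul, hSS]
    have hCdet : IsUnit C.det := (Matrix.isUnit_iff_isUnit_det C).mp hC.isUnit
    exact isUnit_of_mul_isUnit_left (this ▸ hCdet)
  have hdetT : IsUnit T.det := by
    have : T.det * T.det = B.det := by rw [← Matrix.det_mul, hTT]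
    exact isUnit_of_mul_isUnit_left (this ▸ hdetB)
  -- rewrite the trace as tr(NᴴN) with N = T * Z * S
  have hrw : Matrix.trace (Zᴴ * B * Z * C) = Matrix.trace ((T * Z * S)ᴴ * (T * Z * S)) := by
    have hN : (T * Z * S)ᴴ * (T * Z * S) = S * (Zᴴ * B * Z) * S := by
      rw [Matrix.conjTranspose_mul, Matrix.conjTranspose_mul, hSH, hTH]
      simp only [Matrix.mul_assoc]
      rw [show T * (T * (Z * S)) = T * T * (Z * S) from (Matrix.mul_assoc T T (Z * S)).symm, hTT]
    rw [hN, ← hSS]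
    rw [show Zᴴ * B * Z * (S * S) = (Zᴴ * B * Z * S) * S by simp only [Matrix.mul_assoc]]
    rw [Matrix.trace_mul_comm (Zᴴ * B * Z * S) S]
    simp only [Matrix.mul_assoc]
  rw [hrw] at hzero
  have hN0 : T * Z * S = 0 := trace_re_eq_zero_imp_zero _ hzero
  have hZ0 : Z = 0 := by
    have h1 : T * Z = 0 := by
      have := congrArg (fun M => M * S⁻¹) hN0
      simpa [Matrix.mul_nonsing_inv_cancel_right _ _ hdetS] using this
    have := congrArg (fun M => T⁻¹ * M) h1
    simpa [← Matrix.mul_assoc, Matrix.nonsing_inv_mul _ hdetT] using this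
  have := sub_eq_zero.mp (hZ ▸ hZ0)
  exact this
end

section
/- Let B be an m×m complex Hermitian positive definite matrix, S an m×d complex matrix, and set M = Sᴴ B⁻¹ S. Then for every d×d complex Hermitian positive semidefinite matrix Γ, log det(I_d + Γ) − Re tr(Γ) + Re tr((I_d + Γ) · Sᴴ (S Sᴴ + B)⁻¹ S) ≤ log det(I_d + M), where log det denotes the real logarithm of the (positive real) determinant; moreover, equality holds when Γ = M. Consequently, the supremum of the left-hand side over positive semidefinite Hermitian Γ equals log det(I_d + M). -/
open Matrix Complex
open scoped ComplexOrder

namespace LDTAux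

variable {n : ℕ}

lemma trace_eq_sum_eigenvalues {A : Matrix (Fin n) (Fin n) ℂ} (hA : A.IsHermitian) :
    A.trace = ∑ i, (hA.eigenvalues i : ℂ) := by
  exact hA.trace_eq_sum_eigenvalues

lemma det_ofReal {A : Matrix (Fin n) (Fin n) ℂ} (hA : A.PosDef) :
    0 < A.det.re ∧ A.det = (A.det.re : ℂ) := by
  have h := hA.det_pos
  rw [Complex.lt_def] at h
  exact ⟨h.1, by apply Complex.ext <;> simp [← h.2]⟩

lemma logdet_le {X : Matrix (Fin n) (Fin n) ℂ} (hX : X.PosDef) :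
    Real.log X.det.re ≤ X.trace.re - n := by
  have hev : ∀ i, 0 < hX.isHermitian.eigenvalues i := hX.eigenvalues_pos
  have hdet : X.det.re = ∏ i, hX.isHermitian.eigenvalues i := by
    rw [hX.isHermitian.det_eq_prod_eigenvalues]
    norm_cast
  have htr : X.trace.re = ∑ i, hX.isHermitian.eigenvalues i := by
    rw [trace_eq_sum_eigenvalues hX.isHermitian]
    norm_cast
  rw [hdet, htr, Real.log_prod fun i _ => (hev i).ne']
  calc ∑ i, Real.log (hX.isHermitian.eigenvalues i)
      ≤ ∑ i, (hX.isHermitian.eigenvalues i - 1) :=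
        Finset.sum_le_sum fun i _ => Real.log_le_sub_one_of_pos (hev i)
    _ = (∑ i, hX.isHermitian.eigenvalues i) - n := by
        rw [Finset.sum_sub_distrib]; simp

lemma posDef_conj {A Q : Matrix (Fin n) (Fin n) ℂ} (hA : A.PosDef)
    (hQ : Q.IsHermitian) (hu : IsUnit Q) : (Q * A * Q).PosDef := by
  have main : (Qᴴ * A * Q).PosDef := by
    refine Matrix.PosDef.of_dotProduct_mulVec_pos ?_ ?_
    · exact Matrix.isHermitian_conjTranspose_mul_mul Q hA.isHermitian
    · intro x hx
      have hx' : Q *ᵥ x ≠ 0 := by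
        intro h
        exact hx <| ((Matrix.mulVec_injective_iff_isUnit.mpr hu).eq_iff' (mulVec_zero _) |>.1 h)
      simpa only [star_mulVec, dotProduct_mulVec, vecMul_vecMul] using hA.dotProduct_mulVec_pos hx'
  rwa [hQ.eq] at main

open scoped MatrixOrder in
lemma key {A P : Matrix (Fin n) (Fin n) ℂ} (hA : A.PosDef) (hP : P.PosDef) :
    Real.log A.det.re + n - (Matrix.trace (A * P⁻¹)).re ≤ Real.log P.det.re := by
  have hPi : (P⁻¹).PosDef := hP.inv
  set Q := CFC.sqrt (P⁻¹) with hQdef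
  have hQH : Q.IsHermitian := (CFC.sqrt_nonneg (P⁻¹)).posSemidef.1
  have hQQ : Q * Q = P⁻¹ := CFC.sqrt_mul_sqrt_self _ hPi.posSemidef.nonneg
  have hQu : IsUnit Q := by
    rw [Matrix.isUnit_iff_isUnit_det]
    have : IsUnit (Q.det * Q.det) := by
      rw [← Matrix.det_mul, hQQ, ← Matrix.isUnit_iff_isUnit_det]
      exact hPi.isUnit
    exact isUnit_of_mul_isUnit_left this
  have hX : (Q * A * Q).PosDef := posDef_conj hA hQH hQu
  have h1 : Real.log (Q * A * Q).det.re ≤ (Q * A * Q).trace.re - n := logdet_le hX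
  obtain ⟨ha, haeq⟩ := det_ofReal hA
  obtain ⟨hp, hpeq⟩ := det_ofReal hP
  have htr : (Q * A * Q).trace = (A * P⁻¹).trace := by
    rw [Matrix.trace_mul_comm, ← Matrix.mul_assoc, hQQ, Matrix.trace_mul_comm]
  have hdet : (Q * A * Q).det = (A.det.re * (P.det.re)⁻¹ : ℝ) := by
    rw [Matrix.det_mul, Matrix.det_mul]
    have : Q.det * A.det * Q.det = A.det * (Q * Q).det := by
      rw [Matrix.det_mul]; ring
    rw [this, hQQ, Matrix.det_nonsing_inv, Ring.inverse_eq_inv', haeq, hpeq]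
    norm_cast
  have hdre : (Q * A * Q).det.re = A.det.re * (P.det.re)⁻¹ := by
    rw [hdet]; simp
  rw [hdre, Real.log_mul ha.ne' (inv_ne_zero hp.ne'), Real.log_inv] at h1
  rw [htr] at h1
  linarith

end LDTAux

/-- Lagrangian dual transform, per-ratio form (Proposition 1): for Hermitian
positive definite `B` and `M = Sᴴ B⁻¹ S`, every Hermitian positive semidefinite `Γ`
satisfies `log det(I + Γ) − Re tr(Γ) + Re tr((I + Γ)·Sᴴ(S Sᴴ + B)⁻¹S) ≤ log det(I + M)`,
with equality at `Γ = M`; hence the supremum over such `Γ` equals `log det(I + M)`. -/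
theorem lagrangian_dual_transform {m d : ℕ}
    (B : Matrix (Fin m) (Fin m) ℂ) (hB : B.PosDef)
    (S : Matrix (Fin m) (Fin d) ℂ) :
    (∀ Γ : Matrix (Fin d) (Fin d) ℂ, Γ.PosSemidef →
      Real.log ((1 + Γ).det.re) - (Matrix.trace Γ).re
          + (Matrix.trace ((1 + Γ) * (Sᴴ * (S * Sᴴ + B)⁻¹ * S))).re ≤
        Real.log ((1 + Sᴴ * B⁻¹ * S).det.re)) ∧
    (Real.log ((1 + Sᴴ * B⁻¹ * S).det.re) - (Matrix.trace (Sᴴ * B⁻¹ * S)).re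
        + (Matrix.trace ((1 + Sᴴ * B⁻¹ * S) * (Sᴴ * (S * Sᴴ + B)⁻¹ * S))).re =
      Real.log ((1 + Sᴴ * B⁻¹ * S).det.re)) ∧
    IsGreatest
      {v : ℝ | ∃ Γ : Matrix (Fin d) (Fin d) ℂ, Γ.PosSemidef ∧
        v = Real.log ((1 + Γ).det.re) - (Matrix.trace Γ).re
            + (Matrix.trace ((1 + Γ) * (Sᴴ * (S * Sᴴ + B)⁻¹ * S))).re}
      (Real.log ((1 + Sᴴ * B⁻¹ * S).det.re)) := by
  set M : Matrix (Fin d) (Fin d) ℂ := Sᴴ * B⁻¹ * S with hMdef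
  set K : Matrix (Fin d) (Fin d) ℂ := Sᴴ * (S * Sᴴ + B)⁻¹ * S with hKdef
  set P : Matrix (Fin d) (Fin d) ℂ := 1 + M with hPdef
  have hM : M.PosSemidef := hB.inv.posSemidef.conjTranspose_mul_mul_same S
  have hP : P.PosDef := Matrix.PosDef.one.add_posSemidef hM
  have hC : (S * Sᴴ + B).PosDef :=
    Matrix.PosDef.posSemidef_add (Matrix.posSemidef_self_mul_conjTranspose S) hB
  -- Woodbury-type identity : P * K = M
  have hBinv : B⁻¹ * B = 1 := Matrix.nonsing_inv_mul B hB.det_pos.ne'.isUnit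
  have hCinv : (S * Sᴴ + B) * (S * Sᴴ + B)⁻¹ = 1 :=
    Matrix.mul_nonsing_inv _ hC.det_pos.ne'.isUnit
  have hPK : P * K = M := by
    have expand : P * K = Sᴴ * (B⁻¹ * ((B + S * Sᴴ) * ((S * Sᴴ + B)⁻¹ * S))) := by
      rw [hPdef, hKdef, hMdef]
      simp only [Matrix.add_mul, Matrix.mul_add, one_mul, Matrix.mul_assoc]
      rw [← Matrix.mul_assoc B⁻¹ B, hBinv, Matrix.one_mul]
    rw [expand, add_comm B (S * Sᴴ), ← Matrix.mul_assoc (S * Sᴴ + B), hCinv, Matrix.one_mul,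
      hMdef, Matrix.mul_assoc]
  have hPinv : P⁻¹ * P = 1 := Matrix.nonsing_inv_mul P hP.det_pos.ne'.isUnit
  have hK : K = 1 - P⁻¹ := by
    have : K = P⁻¹ * M := by
      calc K = (P⁻¹ * P) * K := by rw [hPinv, one_mul]
        _ = P⁻¹ * (P * K) := by rw [Matrix.mul_assoc]
        _ = P⁻¹ * M := by rw [hPK]
    rw [this, show M = P - 1 by rw [hPdef]; abel, Matrix.mul_sub, hPinv, Matrix.mul_one]
  -- the main inequality
  have main : ∀ Γ : Matrix (Fin d) (Fin d) ℂ, Γ.PosSemidef →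
      Real.log ((1 + Γ).det.re) - (Matrix.trace Γ).re
          + (Matrix.trace ((1 + Γ) * K)).re ≤ Real.log (P.det.re) := by
    intro Γ hΓ
    have hA : (1 + Γ).PosDef := Matrix.PosDef.one.add_posSemidef hΓ
    have hkey := LDTAux.key hA hP
    have htr : (Matrix.trace ((1 + Γ) * K)).re
        = (d : ℝ) + (Matrix.trace Γ).re - (Matrix.trace ((1 + Γ) * P⁻¹)).re := by
      rw [hK, Matrix.mul_sub, Matrix.mul_one, Matrix.trace_sub, Matrix.trace_add,
        Matrix.trace_one]
      simp
    rw [htr]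
    linarith
  refine ⟨main, ?_, ?_⟩
  · have : (Matrix.trace (P * K)).re = (Matrix.trace M).re := by rw [hPK]
    rw [show (1 : Matrix (Fin d) (Fin d) ℂ) + M = P from hPdef.symm] at *
    linarith [this]
  · constructor
    · refine ⟨M, hM, ?_⟩
      have : (Matrix.trace (P * K)).re = (Matrix.trace M).re := by rw [hPK]
      rw [show (1 : Matrix (Fin d) (Fin d) ℂ) + M = P from hPdef.symm]
      linarith [this]
    · rintro v ⟨Γ, hΓ, rfl⟩
      exact main Γ hΓ
end
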